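/- Let Ω ⊆ ℝⁿ be open and u ∈ C¹(Ω) a viscosity subsolution of Du ⊗ Du : D²u ≥ 0 on Ω. Then for every bounded open Ω' with closure in Ω and every affine function A of the form A(z) = a + ξ (X Du(x)) · z with a ∈ ℝ, ξ ≥ 0, x ∈ closure(Ω') satisfying |Du(x)| = sup_{Ω'}|Du|, and X ∈ D^{2,+}u(x), one has ‖Du‖_{L^∞(Ω')} ≤ ‖Du + DA‖_{L^∞(Ω')}. -/

import Mathlib

open scoped BigOperators

/-- The gradient vector `Du(x) ∈ ℝⁿ` of a scalar function `u : ℝⁿ → ℝ`. -/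
noncomputable def gradv {n : ℕ} (u : (Fin n → ℝ) → ℝ) (x : Fin n → ℝ) : Fin n → ℝ :=
  fun i => fderiv ℝ u x (Pi.single i 1)

/-- The Euclidean norm of a vector in `ℝⁿ`. -/
noncomputable def gnorm {n : ℕ} (z : Fin n → ℝ) : ℝ :=
  Real.sqrt (∑ i, (z i) ^ 2)

/-- The feeble second-order superderivatives `D^{2,+}u(x)`: symmetric matrices `X` with
`Du(x) ≠ 0` and `u(x+z) ≤ u(x) + Du(x)·z + ½ X : z ⊗ z + o(|z|²)` as `z → 0`. -/
def D2plus {n : ℕ} (u : (Fin n → ℝ) → ℝ) (x : Fin n → ℝ) :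
    Set (Matrix (Fin n) (Fin n) ℝ) :=
  {X | X.IsSymm ∧ gradv u x ≠ 0 ∧
    ∀ ε : ℝ, 0 < ε → ∃ δ : ℝ, 0 < δ ∧ ∀ z : Fin n → ℝ, gnorm z < δ →
      u (x + z) ≤ u x + (∑ i, gradv u x i * z i)
        + (1 / 2) * (∑ i, ∑ j, X i j * z i * z j) + ε * (gnorm z) ^ 2}

/-- The `L^∞` norm `‖Du‖_{L^∞(S)}` of the gradient over a set `S`. -/
noncomputable def supDu {n : ℕ} (u : (Fin n → ℝ) → ℝ) (S : Set (Fin n → ℝ)) : ℝ :=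
  sSup ((fun y => gnorm (gradv u y)) '' S)

/-- Theorem 4.1, converse direction: if `u ∈ C¹(Ω)` is a viscosity
subsolution of `Du ⊗ Du : D²u ≥ 0` on `Ω`, then for every `Ω' ⋐ Ω` and every affine
`A(z) = a + ξ (X Du(x)) · z` with `ξ ≥ 0`, `x ∈ Ω'(u)` and `X ∈ D^{2,+}u(x)`,
`‖Du‖_{L^∞(Ω')} ≤ ‖Du + DA‖_{L^∞(Ω')}`. -/
theorem stmt9 {n : ℕ} (Ω : Set (Fin n → ℝ)) (hΩ : IsOpen Ω)
    (u : (Fin n → ℝ) → ℝ) (hu : ContDiffOn ℝ 1 u Ω)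
    (hsub : ∀ x ∈ Ω, ∀ X ∈ D2plus u x,
      0 ≤ ∑ i, ∑ j, X i j * (gradv u x i * gradv u x j)) :
    ∀ Ω' : Set (Fin n → ℝ), IsOpen Ω' → Bornology.IsBounded Ω' → closure Ω' ⊆ Ω →
      ∀ x ∈ closure Ω', gnorm (gradv u x) = supDu u Ω' →
      ∀ X ∈ D2plus u x, ∀ ξ : ℝ, 0 ≤ ξ → ∀ _a : ℝ,
        supDu u Ω' ≤
          sSup ((fun y => gnorm (gradv u y + ξ • X.mulVec (gradv u x))) '' Ω') := by
  intro Ω' hΩ'open hΩ'bdd hΩ'sub x hx hxmax X hX ξ hξ _a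
  set p : Fin n → ℝ := gradv u x with hp
  set v : Fin n → ℝ := ξ • X.mulVec p with hv
  have hxΩ : x ∈ Ω := hΩ'sub hx
  have hS : 0 ≤ ∑ i, ∑ j, X i j * (p i * p j) := hsub x hxΩ X hX
  have hdot : ∑ i, p i * v i = ξ * ∑ i, ∑ j, X i j * (p i * p j) := by
    rw [Finset.mul_sum]
    refine Finset.sum_congr rfl fun i _ => ?_
    simp only [hv, Pi.smul_apply, smul_eq_mul, Matrix.mulVec, dotProduct]
    rw [Finset.mul_sum, Finset.mul_sum, Finset.mul_sum]
    exact Finset.sum_congr rfl fun j _ => by ring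
  have hkey : gnorm p ≤ gnorm (p + v) := by
    apply Real.sqrt_le_sqrt
    have hexp : ∑ i, ((p + v) i) ^ 2
        = ∑ i, (p i) ^ 2 + 2 * (∑ i, p i * v i) + ∑ i, (v i) ^ 2 := by
      rw [Finset.mul_sum, ← Finset.sum_add_distrib, ← Finset.sum_add_distrib]
      exact Finset.sum_congr rfl fun i _ => by simp [Pi.add_apply]; ring
    have h1 : 0 ≤ 2 * (ξ * ∑ i, ∑ j, X i j * (p i * p j)) :=
      mul_nonneg (by norm_num) (mul_nonneg hξ hS)
    have h2 : 0 ≤ ∑ i, (v i) ^ 2 := Finset.sum_nonneg fun i _ => sq_nonneg _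
    rw [hexp, hdot]
    linarith
  have hfc : ContinuousOn (fderiv ℝ u) Ω := hu.continuousOn_fderiv_of_isOpen hΩ le_rfl
  have hgradc : ContinuousOn (gradv u) Ω := by
    apply continuousOn_pi.2
    intro i
    exact (ContinuousLinearMap.apply ℝ ℝ (Pi.single i 1 : Fin n → ℝ)).continuous.comp_continuousOn hfc
  have hgnc : Continuous (gnorm : (Fin n → ℝ) → ℝ) := by
    unfold gnorm
    exact Real.continuous_sqrt.comp (continuous_finset_sum _ fun i _ => (continuous_apply i).pow 2)
  have hgc : ContinuousOn (fun y => gnorm (gradv u y + v)) (closure Ω') :=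
    hgnc.comp_continuousOn ((hgradc.mono hΩ'sub).add continuousOn_const)
  have hcomp : IsCompact (closure Ω') := hΩ'bdd.isCompact_closure
  have hbdd : BddAbove ((fun y => gnorm (gradv u y + v)) '' Ω') :=
    ((hcomp.image_of_continuousOn hgc).bddAbove).mono (Set.image_mono subset_closure)
  have hmem : gnorm (p + v) ∈ closure ((fun y => gnorm (gradv u y + v)) '' Ω') :=
    hgc.image_closure ⟨x, hx, rfl⟩
  have hle : gnorm (p + v) ≤ sSup ((fun y => gnorm (gradv u y + v)) '' Ω') :=
    closure_minimal (fun y hy => le_csSup hbdd hy) isClosed_Iic hmem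
  rw [← hxmax]
  exact hkey.trans hle
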